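/- Let A be a d-th order CP tensor with factor matrices U_p ∈ ℝ^{n_p×R}, and let k be an integer with 1 ≤ k ≤ ∏_{p=1}^d n_p. Suppose the matrices X_p ∈ ℝ^{n_p×k} (p = 1,…,d) satisfy ‖X_p(:,j)‖₂ = 1 for all p and j, and ∏_{p=1}^d ⟨X_p(:,i), X_p(:,j)⟩ = 0 for all i ≠ j. Then Σ_{j=1}^k Σ_{r=1}^R ∏_{p=1}^d ( Σ_{l=1}^{n_p} U_p(l,r)·X_p(l,j)² ) is at most the sum of the k largest entries of A. -/

import Mathlib

open Finset

lemma prod_sum_pi {d : ℕ} {n : Fin d → ℕ} (f : ∀ p : Fin d, Fin (n p) → ℝ) :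
    ∏ p, ∑ l, f p l = ∑ s : (∀ p, Fin (n p)), ∏ p, f p (s p) := by
  rw [Finset.prod_univ_sum, Fintype.piFinset_univ]

lemma bessel_step {d k : ℕ} {n : Fin d → ℕ} (X : ∀ p : Fin d, Matrix (Fin (n p)) (Fin k) ℝ)
    (hnorm : ∀ (p : Fin d) (j : Fin k), ∑ l, (X p l j) ^ 2 = 1)
    (horth : ∀ i j : Fin k, i ≠ j → ∏ p : Fin d, (∑ l, X p l i * X p l j) = 0)
    (s : ∀ p, Fin (n p)) :
    ∑ j : Fin k, ∏ p, (X p (s p) j) ^ 2 ≤ 1 := by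
  classical
  set E := EuclideanSpace ℝ (∀ p, Fin (n p))
  set v : Fin k → E := fun j => WithLp.toLp 2 (fun t => ∏ p, X p (t p) j : (∀ p, Fin (n p)) → ℝ) with hv
  have hinner : ∀ i j : Fin k, inner ℝ (v i) (v j) = ∏ p : Fin d, (∑ l, X p l i * X p l j) := by
    intro i j
    rw [prod_sum_pi]
    simp only [PiLp.inner_apply, WithLp.ofLp_toLp, Real.inner_apply, conj_trivial, hv]
    refine Finset.sum_congr rfl fun t _ => ?_
    change inner ℝ (∏ p, X p (t p) i) (∏ p, X p (t p) j) = _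
    rw [Real.inner_apply]
    show (∏ p, X p (t p) i) * (∏ p, X p (t p) j) = _
    rw [← Finset.prod_mul_distrib]
  have hon : Orthonormal ℝ v := by
    rw [orthonormal_iff_ite]
    intro i j
    by_cases h : i = j
    · subst h
      simp only [if_pos rfl, hinner]
      have : ∀ p : Fin d, (∑ l, X p l i * X p l i) = 1 := by
        intro p; rw [← hnorm p i]; congr 1; funext l; ring
      simp [this]
    · rw [if_neg h, hinner, horth i j h]
  have hb := hon.sum_inner_products_le (s := Finset.univ) (EuclideanSpace.single s (1:ℝ))
  rw [EuclideanSpace.norm_single] at hb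
  calc ∑ j : Fin k, ∏ p, (X p (s p) j) ^ 2
      = ∑ j : Fin k, ‖inner ℝ (v j) (EuclideanSpace.single s (1:ℝ))‖ ^ 2 := by
        refine Finset.sum_congr rfl fun j _ => ?_
        rw [EuclideanSpace.inner_single_right]
        simp only [conj_trivial, one_mul, Real.norm_eq_abs, sq_abs, hv]
        exact Finset.prod_pow _ _ _
    _ ≤ ‖(1:ℝ)‖ ^ 2 := hb
    _ = 1 := by norm_num

theorem stmt_1 (d R k : ℕ) (n : Fin d → ℕ)
    (U : ∀ p : Fin d, Matrix (Fin (n p)) (Fin R) ℝ)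
    (hk1 : 1 ≤ k) (hk2 : k ≤ ∏ p, n p)
    (X : ∀ p : Fin d, Matrix (Fin (n p)) (Fin k) ℝ)
    (hnorm : ∀ (p : Fin d) (j : Fin k), ∑ l, (X p l j) ^ 2 = 1)
    (horth : ∀ i j : Fin k, i ≠ j → ∏ p : Fin d, (∑ l, X p l i * X p l j) = 0) :
    ∑ j : Fin k, ∑ r : Fin R, ∏ p : Fin d, (∑ l, U p l r * (X p l j) ^ 2)
      ≤ sSup {s : ℝ | ∃ φ : Fin k → (∀ p : Fin d, Fin (n p)),
          Function.Injective φ ∧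
          s = ∑ j : Fin k, ∑ r : Fin R, ∏ p : Fin d, U p (φ j p) r} := by
  classical
  set A : (∀ p, Fin (n p)) → ℝ := fun s => ∑ r : Fin R, ∏ p, U p (s p) r with hA
  set w : Fin k → (∀ p, Fin (n p)) → ℝ := fun j s => ∏ p, (X p (s p) j) ^ 2 with hw
  set c : (∀ p, Fin (n p)) → ℝ := fun s => ∑ j, w j s with hc
  -- rewrite LHS
  have hLHS : ∑ j : Fin k, ∑ r : Fin R, ∏ p : Fin d, (∑ l, U p l r * (X p l j) ^ 2)
      = ∑ s : (∀ p, Fin (n p)), c s * A s := by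
    have h1 : ∀ (j : Fin k), ∑ r : Fin R, ∏ p : Fin d, (∑ l, U p l r * (X p l j) ^ 2)
        = ∑ s : (∀ p, Fin (n p)), w j s * A s := by
      intro j
      have : ∀ r : Fin R, ∏ p : Fin d, (∑ l, U p l r * (X p l j) ^ 2)
          = ∑ s : (∀ p, Fin (n p)), w j s * ∏ p, U p (s p) r := by
        intro r
        rw [prod_sum_pi]
        refine Finset.sum_congr rfl fun s _ => ?_
        rw [hw]
        simp only
        rw [← Finset.prod_mul_distrib]
        refine Finset.prod_congr rfl fun p _ => ?_
        ring
      simp only [this]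
      rw [Finset.sum_comm]
      refine Finset.sum_congr rfl fun s _ => ?_
      rw [hA]
      simp only
      rw [Finset.mul_sum]
    simp only [h1]
    rw [Finset.sum_comm]
    refine Finset.sum_congr rfl fun s _ => ?_
    rw [hc]
    simp only
    rw [Finset.sum_mul]
  have hc0 : ∀ s, 0 ≤ c s := by
    intro s
    refine Finset.sum_nonneg fun j _ => Finset.prod_nonneg fun p _ => sq_nonneg _
  have hc1 : ∀ s, c s ≤ 1 := fun s => bessel_step X hnorm horth s
  have hcsum : ∑ s : (∀ p, Fin (n p)), c s = (k : ℝ) := by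
    rw [hc]
    simp only
    rw [Finset.sum_comm]
    have : ∀ j : Fin k, ∑ s : (∀ p, Fin (n p)), w j s = 1 := by
      intro j
      rw [hw]
      simp only
      rw [← prod_sum_pi (fun p l => X p l j ^ 2)]
      simp [hnorm]
    simp [this]
  -- top-k subset
  have hcard : k ≤ Fintype.card (∀ p, Fin (n p)) := by
    simpa [Fintype.card_pi] using hk2
  have hne : (Finset.univ.powersetCard k (α := ∀ p, Fin (n p))).Nonempty := by
    rw [Finset.powersetCard_nonempty]
    simpa using hcard
  obtain ⟨T, hTmem, hTmax⟩ := Finset.exists_max_image _ (fun T => ∑ s ∈ T, A s) hne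
  have hTcard : T.card = k := (Finset.mem_powersetCard_univ.mp hTmem)
  have hTne : T.Nonempty := Finset.card_pos.mp (by omega)
  obtain ⟨t0, ht0, hmin⟩ := T.exists_min_image A hTne
  have hout : ∀ s ∉ T, A s ≤ A t0 := by
    intro s hs
    have hserase : s ∉ T.erase t0 := fun h => hs (Finset.mem_of_mem_erase h)
    have hcard' : (insert s (T.erase t0)).card = k := by
      rw [Finset.card_insert_of_notMem hserase, Finset.card_erase_of_mem ht0, hTcard]
      omega
    have hmem' : insert s (T.erase t0) ∈ Finset.univ.powersetCard k := by
      rw [Finset.mem_powersetCard_univ]; exact hcard'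
    have hle := hTmax _ hmem'
    rw [Finset.sum_insert hserase] at hle
    have herase : ∑ x ∈ T.erase t0, A x = ∑ x ∈ T, A x - A t0 := by
      have := Finset.add_sum_erase T A ht0
      linarith [Finset.add_sum_erase T A ht0]
    linarith
  -- main inequality
  have hkey : ∑ s : (∀ p, Fin (n p)), c s * A s ≤ ∑ s ∈ T, A s := by
    have hT' : ∑ s ∈ T, A s
        = ∑ s : (∀ p, Fin (n p)), (if s ∈ T then (1:ℝ) else 0) * A s := by
      symm
      simp [ite_mul, Finset.sum_ite_mem]
    rw [hT']
    have hchi : ∑ s : (∀ p, Fin (n p)), (if s ∈ T then (1:ℝ) else 0) = (k : ℝ) := by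
      rw [Finset.sum_boole]
      simp [Finset.filter_mem_eq_inter, hTcard]
    have hterm : ∀ s : (∀ p, Fin (n p)),
        (c s - (if s ∈ T then (1:ℝ) else 0)) * A s
          ≤ (c s - (if s ∈ T then (1:ℝ) else 0)) * A t0 := by
      intro s
      by_cases hs : s ∈ T
      · rw [if_pos hs]
        nlinarith [hc1 s, hmin s hs]
      · rw [if_neg hs]
        nlinarith [hc0 s, hout s hs]
    have hsum := Finset.sum_le_sum (fun s (_ : s ∈ Finset.univ) => hterm s)
    have e1 : ∑ s : (∀ p, Fin (n p)), (c s - (if s ∈ T then (1:ℝ) else 0)) * A t0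
        = ((k:ℝ) - k) * A t0 := by
      rw [← Finset.sum_mul]
      rw [Finset.sum_sub_distrib, hcsum, hchi]
    have e2 : ∑ s : (∀ p, Fin (n p)), (c s - (if s ∈ T then (1:ℝ) else 0)) * A s
        = ∑ s : (∀ p, Fin (n p)), c s * A s
          - ∑ s : (∀ p, Fin (n p)), (if s ∈ T then (1:ℝ) else 0) * A s := by
      rw [← Finset.sum_sub_distrib]
      refine Finset.sum_congr rfl fun s _ => ?_
      ring
    rw [e1, e2] at hsum
    linarith
  -- realize T as an injective selection
  let e : Fin k ≃ {x // x ∈ T} := (Finset.equivFinOfCardEq hTcard).symm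
  let φ : Fin k → (∀ p, Fin (n p)) := fun j => (e j : ∀ p, Fin (n p))
  have hφinj : Function.Injective φ := fun a b h =>
    e.injective (Subtype.ext h)
  have hφsum : ∑ j : Fin k, ∑ r : Fin R, ∏ p : Fin d, U p (φ j p) r = ∑ s ∈ T, A s := by
    have : ∑ j : Fin k, A (φ j) = ∑ x : {x // x ∈ T}, A x := by
      exact Equiv.sum_comp e (fun x => A (x : ∀ p, Fin (n p)))
    rw [show (∑ j : Fin k, ∑ r : Fin R, ∏ p : Fin d, U p (φ j p) r) = ∑ j : Fin k, A (φ j) from rfl,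
      this, Finset.sum_coe_sort]
  -- conclude via sSup
  set S : Set ℝ := {s : ℝ | ∃ φ : Fin k → (∀ p : Fin d, Fin (n p)),
          Function.Injective φ ∧
          s = ∑ j : Fin k, ∑ r : Fin R, ∏ p : Fin d, U p (φ j p) r} with hS
  have hmemS : (∑ s ∈ T, A s) ∈ S := ⟨φ, hφinj, hφsum.symm⟩
  have hbdd : BddAbove S := by
    have hsub : S ⊆ Set.range (fun ψ : Fin k → (∀ p, Fin (n p)) =>
        ∑ j : Fin k, ∑ r : Fin R, ∏ p : Fin d, U p (ψ j p) r) := by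
      rintro x ⟨ψ, -, rfl⟩
      exact ⟨ψ, rfl⟩
    exact ((Set.finite_range _).subset hsub).bddAbove
  calc ∑ j : Fin k, ∑ r : Fin R, ∏ p : Fin d, (∑ l, U p l r * (X p l j) ^ 2)
      = ∑ s : (∀ p, Fin (n p)), c s * A s := hLHS
    _ ≤ ∑ s ∈ T, A s := hkey
    _ ≤ sSup S := le_csSup hbdd hmemS
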